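/- The generating function identity (qνz;q)_s (q^{-k+s+1}z;q)_{k-s} = Σ_{a≥0} ((qz)^a/(q;q)_a) · Σ_{0≤j≤a}(q^sν)^j (ν;q)_{a-j}(ν^{-1}q^{-k};q)_j binom_q(a,j) holds as formal power series in z, for 0 ≤ s ≤ k. -/

import Mathlib

open scoped BigOperators

noncomputable section

/-- The q-Pochhammer symbol `(z;q)_m = ∏_{j=0}^{m-1} (1 - z q^j)`. -/
def qP (q z : ℝ) (m : ℕ) : ℝ := ∏ j ∈ Finset.range m, (1 - z * q ^ j)

/-- The q-binomial coefficient, zero outside `0 ≤ k ≤ m`. -/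
def qBinom (q : ℝ) (m k : ℕ) : ℝ :=
  if k ≤ m then qP q q m / (qP q q k * qP q q (m - k)) else 0

open PowerSeries

lemma qP_succ (q z : ℝ) (m : ℕ) : qP q z (m+1) = qP q z m * (1 - z * q ^ m) :=
  Finset.prod_range_succ _ _

lemma qP_pos {q : ℝ} (hq0 : 0 < q) (hq1 : q < 1) (n : ℕ) : 0 < qP q q n := by
  apply Finset.prod_pos
  intro j _
  have h1 : q * q ^ j ≤ q * 1 := by
    have : q ^ j ≤ 1 := pow_le_one₀ hq0.le hq1.le
    nlinarith
  linarith

lemma coeff_one_sub_mul (e : ℝ) (S : ℝ⟦X⟧) (n : ℕ) :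
    coeff (R := ℝ) (n+1) ((1 - C (R := ℝ) e * X) * S) = coeff (R := ℝ) (n+1) S - e * coeff (R := ℝ) n S := by
  rw [sub_mul, one_mul, map_sub, mul_assoc, coeff_C_mul, coeff_succ_X_mul]

lemma coeff_zero_one_sub_mul (e : ℝ) (S : ℝ⟦X⟧) :
    coeff (R := ℝ) 0 ((1 - C (R := ℝ) e * X) * S) = coeff (R := ℝ) 0 S := by
  simp [coeff_zero_eq_constantCoeff, map_mul]

lemma uniq {q : ℝ} (hq0 : 0 < q) (hq1 : q < 1) (a b c d : ℝ) (P Q : ℝ⟦X⟧)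
    (hP : (1 - C (R := ℝ) a * X) * ((1 - C (R := ℝ) b * X) * rescale q P)
        = (1 - C (R := ℝ) c * X) * ((1 - C (R := ℝ) d * X) * P))
    (hQ : (1 - C (R := ℝ) a * X) * ((1 - C (R := ℝ) b * X) * rescale q Q)
        = (1 - C (R := ℝ) c * X) * ((1 - C (R := ℝ) d * X) * Q))
    (h0 : coeff (R := ℝ) 0 P = coeff (R := ℝ) 0 Q) : P = Q := by
  ext n
  induction n using Nat.strong_induction_on with
  | _ n ih =>
    match n, ih with
    | 0, _ => exact h0
    | 1, ih =>
      have i0 : coeff (R := ℝ) 0 P = coeff (R := ℝ) 0 Q := ih 0 (by norm_num)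
      have e1 := congrArg (coeff (R := ℝ) 1) hP
      have e2 := congrArg (coeff (R := ℝ) 1) hQ
      rw [show (1:ℕ) = 0 + 1 from rfl] at e1 e2
      simp only [coeff_one_sub_mul, coeff_zero_one_sub_mul, coeff_rescale] at e1 e2
      have hz : (q - 1) * (coeff (R := ℝ) 1 P - coeff (R := ℝ) 1 Q) = 0 := by
        simp only [pow_one, pow_zero, one_mul] at e1 e2
        linear_combination e1 - e2 + (a + b - c - d) * i0
      have hq : q - 1 ≠ 0 := by linarith
      have := (mul_eq_zero.mp hz).resolve_left hq
      linarith [this]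
    | (m+2), ih =>
      have i0 : coeff (R := ℝ) (m+1) P = coeff (R := ℝ) (m+1) Q := ih (m+1) (by omega)
      have i1 : coeff (R := ℝ) m P = coeff (R := ℝ) m Q := ih m (by omega)
      have e1 := congrArg (coeff (R := ℝ) (m+2)) hP
      have e2 := congrArg (coeff (R := ℝ) (m+2)) hQ
      rw [show m + 2 = (m+1) + 1 from rfl] at e1 e2
      simp only [show m + 1 = m + 1 from rfl, coeff_one_sub_mul, coeff_rescale] at e1 e2
      have hz : (q^(m+2) - 1) * (coeff (R := ℝ) (m+2) P - coeff (R := ℝ) (m+2) Q) = 0 := by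
        linear_combination e1 - e2 + ((a + b) * q^(m+1) - (c + d)) * i0 + (c*d - a*b*q^m) * i1
      have hql : q ^ (m+2) < 1 := pow_lt_one₀ hq0.le hq1 (by omega)
      have hq : q^(m+2) - 1 ≠ 0 := by linarith
      have := (mul_eq_zero.mp hz).resolve_left hq
      linarith [this]

/-- Cauchy / q-binomial series. -/
def G (q u w : ℝ) : ℝ⟦X⟧ := PowerSeries.mk fun n => u ^ n * qP q w n / qP q q n

lemma cauchy {q : ℝ} (hq0 : 0 < q) (hq1 : q < 1) (u w : ℝ) :
    (1 - C (R := ℝ) (u * w) * X) * rescale q (G q u w) = (1 - C (R := ℝ) u * X) * G q u w := by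
  ext n
  cases n with
  | zero =>
    rw [show (0:ℕ) = 0 from rfl, coeff_zero_one_sub_mul, coeff_zero_one_sub_mul, coeff_rescale]
    ring
  | succ m =>
    rw [coeff_one_sub_mul, coeff_one_sub_mul, coeff_rescale, coeff_rescale]
    simp only [G, coeff_mk]
    have h1 : qP q q m ≠ 0 := (qP_pos hq0 hq1 m).ne'
    have h2 : qP q q (m+1) ≠ 0 := (qP_pos hq0 hq1 (m+1)).ne'
    rw [qP_succ q w m, qP_succ q q m]
    rw [qP_succ q q m] at h2
    have h2' : 1 - q * q ^ m ≠ 0 := right_ne_zero_of_mul h2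
    field_simp
    linear_combination (qP q w m * u * u ^ m * (q ^ m * w - 1)) * mul_inv_cancel₀ h2'

lemma prodEq {q : ℝ} (c : ℝ) (m : ℕ) :
    (1 - C (R := ℝ) c * X) * rescale q (∏ j ∈ Finset.range m, (1 - C (R := ℝ) (c * q ^ j) * X))
    = (1 - C (R := ℝ) (c * q ^ m) * X) * ∏ j ∈ Finset.range m, (1 - C (R := ℝ) (c * q ^ j) * X) := by
  rw [map_prod]
  have h : ∀ j : ℕ, rescale q (1 - C (R := ℝ) (c * q ^ j) * X) = 1 - C (R := ℝ) (c * q ^ (j+1)) * X := by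
    intro j
    have hC : rescale q (C (R := ℝ) (c * q ^ j)) = C (R := ℝ) (c * q ^ j) := by
      ext n
      rw [coeff_rescale, coeff_C]
      split_ifs with h
      · subst h; simp
      · rw [mul_zero]
    rw [map_sub, map_one, map_mul, rescale_X, hC, ← mul_assoc, ← map_mul]
    ring_nf
  simp only [h]
  have h2 : (1 - C (R := ℝ) c * X) * ∏ j ∈ Finset.range m, (1 - C (R := ℝ) (c * q ^ (j+1)) * X)
      = ∏ j ∈ Finset.range (m+1), (1 - C (R := ℝ) (c * q ^ j) * X) := by
    rw [Finset.prod_range_succ']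
    simp [mul_comm]
  rw [h2, Finset.prod_range_succ, mul_comm]

lemma combine {q : ℝ} (a b c d : ℝ) (P Q : ℝ⟦X⟧)
    (h1 : (1 - C (R := ℝ) a * X) * rescale q P = (1 - C (R := ℝ) c * X) * P)
    (h2 : (1 - C (R := ℝ) b * X) * rescale q Q = (1 - C (R := ℝ) d * X) * Q) :
    (1 - C (R := ℝ) a * X) * ((1 - C (R := ℝ) b * X) * rescale q (P * Q))
    = (1 - C (R := ℝ) c * X) * ((1 - C (R := ℝ) d * X) * (P * Q)) := by
  rw [map_mul]
  linear_combination (1 - C (R := ℝ) b * X) * rescale q Q * h1 + (1 - C (R := ℝ) c * X) * P * h2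

lemma G_mul_G {q ν : ℝ} (hq0 : 0 < q) (hq1 : q < 1) (s k : ℕ) :
    G q (ν * q ^ (s+1)) (ν⁻¹ * q ^ (-(k:ℤ))) * G q q ν
    = PowerSeries.mk (fun a =>
        q ^ a / qP q q a *
          ∑ j ∈ Finset.range (a + 1),
            (q ^ s * ν) ^ j * qP q ν (a - j) *
              qP q (ν⁻¹ * q ^ (-(k : ℤ))) j * qBinom q a j) := by
  ext n
  rw [coeff_mul, Finset.Nat.sum_antidiagonal_eq_sum_range_succ_mk, coeff_mk, Finset.mul_sum]
  apply Finset.sum_congr rfl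
  intro j hj
  have hj' : j ≤ n := Finset.mem_range_succ_iff.mp hj
  simp only [G, coeff_mk]
  rw [qBinom, if_pos hj']
  set w := ν⁻¹ * q ^ (-(k:ℤ)) with hw
  have hpow : (ν * q ^ (s+1)) ^ j * q ^ (n - j) = q ^ n * (q ^ s * ν) ^ j := by
    have he : s * j + j + (n - j) = n + s * j := by omega
    calc (ν * q ^ (s+1)) ^ j * q ^ (n - j) = ν ^ j * q ^ (s * j + j + (n - j)) := by
          rw [mul_pow, ← pow_mul, add_mul, one_mul, pow_add, pow_add, pow_add]; ring
      _ = q ^ n * (q ^ s * ν) ^ j := by rw [he, mul_pow, ← pow_mul, pow_add]; ring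
  have h1 : qP q q j ≠ 0 := (qP_pos hq0 hq1 j).ne'
  have h2 : qP q q (n - j) ≠ 0 := (qP_pos hq0 hq1 (n - j)).ne'
  have h3 : qP q q n ≠ 0 := (qP_pos hq0 hq1 n).ne'
  field_simp
  linear_combination (qP q w j * qP q ν (n - j)) * hpow

open PowerSeries in

/-- The generating function identity
`(qνz;q)_s (q^{-k+s+1}z;q)_{k-s}
  = ∑_{a≥0} ((qz)^a/(q;q)_a) ∑_{0≤j≤a}(q^sν)^j (ν;q)_{a-j}(ν^{-1}q^{-k};q)_j binom_q(a,j)`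
as formal power series in `z`, for `0 ≤ s ≤ k`. -/
theorem generating_identity (q ν : ℝ) (hq0 : 0 < q) (hq1 : q < 1)
    (hν : ν ≠ 0) (s k : ℕ) (hsk : s ≤ k) :
    (∏ j ∈ Finset.range s, (1 - C (R := ℝ) (q * ν * q ^ j) * X)) *
      (∏ j ∈ Finset.range (k - s),
        (1 - C (R := ℝ) ((q : ℝ) ^ ((s : ℤ) - k + 1) * q ^ j) * X))
      = PowerSeries.mk (fun a =>
          q ^ a / qP q q a *
            ∑ j ∈ Finset.range (a + 1),
              (q ^ s * ν) ^ j * qP q ν (a - j) *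
                qP q (ν⁻¹ * q ^ (-(k : ℤ))) j * qBinom q a j) := by
  have hqne : q ≠ 0 := hq0.ne'
  rw [← G_mul_G (ν := ν) hq0 hq1 s k]
  -- functional equations for the LHS factors
  have hΦ1 := prodEq (q := q) (q * ν) s
  rw [show q * ν * q ^ s = ν * q ^ (s+1) from by ring] at hΦ1
  have hΦ2 := prodEq (q := q) (q ^ ((s:ℤ) - k + 1)) (k - s)
  have c2 : q ^ ((s:ℤ) - k + 1) * q ^ (k - s) = q := by
    rw [← zpow_natCast q (k - s), ← zpow_add₀ hqne, Nat.cast_sub hsk,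
      show (s:ℤ) - k + 1 + ((k:ℤ) - s) = 1 from by ring, zpow_one]
  rw [c2] at hΦ2
  have hP := combine (q := q) (q * ν) (q ^ ((s:ℤ) - k + 1)) (ν * q ^ (s+1)) q _ _ hΦ1 hΦ2
  -- functional equations for the RHS factors
  have hG2 := cauchy hq0 hq1 (ν * q ^ (s+1)) (ν⁻¹ * q ^ (-(k:ℤ)))
  have c3 : ν * q ^ (s+1) * (ν⁻¹ * q ^ (-(k:ℤ))) = q ^ ((s:ℤ) - k + 1) := by
    have h : ν * q ^ (s+1) * (ν⁻¹ * q ^ (-(k:ℤ)))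
        = (ν * ν⁻¹) * (q ^ ((s+1 : ℕ) : ℤ) * q ^ (-(k:ℤ))) := by
      rw [zpow_natCast]; ring
    rw [h, mul_inv_cancel₀ hν, one_mul, ← zpow_add₀ hqne]
    congr 1
    push_cast
    ring
  rw [c3] at hG2
  have hG1 := cauchy hq0 hq1 q ν
  rw [show q * ν = q * ν from rfl] at hG1
  have hQ := combine (q := q) (q ^ ((s:ℤ) - k + 1)) (q * ν) (ν * q ^ (s+1)) q _ _ hG2 hG1
  rw [mul_left_comm ((1 : ℝ⟦X⟧) - C (R := ℝ) (q ^ ((s:ℤ) - k + 1)) * X)] at hQ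
  -- constant coefficients
  have h0 : coeff (R := ℝ) 0 ((∏ j ∈ Finset.range s, (1 - C (R := ℝ) (q * ν * q ^ j) * X)) *
      (∏ j ∈ Finset.range (k - s),
        (1 - C (R := ℝ) ((q : ℝ) ^ ((s : ℤ) - k + 1) * q ^ j) * X)))
      = coeff (R := ℝ) 0 (G q (ν * q ^ (s+1)) (ν⁻¹ * q ^ (-(k:ℤ))) * G q q ν) := by
    simp [coeff_zero_eq_constantCoeff, map_mul, map_prod, G, qP]
  exact uniq hq0 hq1 (q * ν) (q ^ ((s:ℤ) - k + 1)) (ν * q ^ (s+1)) q _ _ hP hQ h0
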